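/- Let d be a positive even integer, H_k = F_{2+d(k-1)}, and let ℱ be the set of sequences satisfying the Chung–Graham rule of expansion for even interval d, equipped with the lexicographic-from-the-right order. If lub : ℱ → ℱ denotes the immediate-successor map and 0 denotes the zero sequence, then Σ_k (lub^n(0))_k · H_k = n for all n ≥ 0. -/

import Mathlib

/-- Lucas sequence: K 1 = 1, K 2 = 3, K (k+2) = K (k+1) + K k. -/
def lucas : ℕ → ℕ
  | 0 => 2
  | 1 => 1
  | n + 2 => lucas (n + 1) + lucas n


lemma lucas_add_fib : ∀ n, lucas n + Nat.fib n = 2 * Nat.fib (n+1)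
  | 0 => by simp [lucas]
  | 1 => by simp [lucas]
  | n+2 => by
    have h1 := lucas_add_fib n
    have h2 := lucas_add_fib (n+1)
    have e1 : Nat.fib (n+2) = Nat.fib n + Nat.fib (n+1) := Nat.fib_add_two
    have e2 : Nat.fib (n+3) = Nat.fib (n+1) + Nat.fib (n+2) := Nat.fib_add_two
    simp only [lucas, show n+2+1 = n+3 by ring, show n+1+1 = n+2 by ring] at *
    omega

lemma cassini_pair : ∀ n, (Nat.fib (2*n) * Nat.fib (2*n+2) + 1 = Nat.fib (2*n+1)^2) ∧
    (Nat.fib (2*n+1) * Nat.fib (2*n+3) = Nat.fib (2*n+2)^2 + 1)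
  | 0 => by decide
  | n+1 => by
    obtain ⟨ih1, ih2⟩ := cassini_pair n
    have e3 : Nat.fib (2*n+3) = Nat.fib (2*n+1) + Nat.fib (2*n+2) := by
      rw [show 2*n+3 = (2*n+1)+2 by ring]; exact Nat.fib_add_two
    have e4 : Nat.fib (2*n+4) = Nat.fib (2*n+2) + Nat.fib (2*n+3) := by
      rw [show 2*n+4 = (2*n+2)+2 by ring]; exact Nat.fib_add_two
    have e5 : Nat.fib (2*n+5) = Nat.fib (2*n+3) + Nat.fib (2*n+4) := by
      rw [show 2*n+5 = (2*n+3)+2 by ring]; exact Nat.fib_add_two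
    constructor
    · rw [show 2*(n+1) = 2*n+2 by ring, show 2*n+2+2 = 2*n+4 by ring,
        show 2*n+2+1 = 2*n+3 by ring]
      nlinarith [ih1, ih2, e3, e4]
    · rw [show 2*(n+1)+1 = 2*n+3 by ring, show 2*(n+1)+3 = 2*n+5 by ring,
        show 2*(n+1)+2 = 2*n+4 by ring]
      nlinarith [ih1, ih2, e3, e4, e5]

lemma fib_lucas (d : ℕ) (hde : Even d) :
    ∀ n, Nat.fib (n + 2*d) + Nat.fib n = lucas d * Nat.fib (n + d)
  | 0 => by
    have hl := lucas_add_fib d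
    have hle : Nat.fib d ≤ 2 * Nat.fib (d + 1) :=
      le_trans (Nat.fib_mono (by omega : d ≤ d+1)) (by omega)
    have h2 := Nat.fib_two_mul d
    zify [hle] at h2 hl ⊢
    simp only [Nat.zero_add, Nat.fib_zero]
    push_cast
    linear_combination h2 - (Nat.fib d : ℤ) * hl
  | 1 => by
    obtain ⟨e, he⟩ := hde
    have hd2 : d = 2 * e := by omega
    have cass := (cassini_pair e).1
    have hl := lucas_add_fib d
    have h1 := Nat.fib_two_mul_add_one d
    have e2 : Nat.fib (d+2) = Nat.fib d + Nat.fib (d+1) := Nat.fib_add_two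
    rw [show 2*e+2 = d+2 by omega, show 2*e+1 = d+1 by omega, show 2*e = d by omega] at cass
    zify at cass hl h1 e2 ⊢
    rw [show 1 + 2*d = 2*d+1 by ring, show 1 + d = d + 1 by ring, Nat.fib_one]
    push_cast
    linear_combination h1 + cass - (Nat.fib d : ℤ) * e2 - (Nat.fib (d+1) : ℤ) * hl
  | n+2 => by
    have ih0 := fib_lucas d hde n
    have ih1 := fib_lucas d hde (n+1)
    have r1 : Nat.fib (n+2+2*d) = Nat.fib (n+2*d) + Nat.fib (n+1+2*d) := by
      rw [show n+2+2*d = (n+2*d)+2 by ring]; rw [Nat.fib_add_two]; ring_nf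
    have r2 : Nat.fib (n+2) = Nat.fib n + Nat.fib (n+1) := Nat.fib_add_two
    have r3 : Nat.fib (n+2+d) = Nat.fib (n+d) + Nat.fib (n+1+d) := by
      rw [show n+2+d = (n+d)+2 by ring]; rw [Nat.fib_add_two]; ring_nf
    have hdist : lucas d * (Nat.fib (n+d) + Nat.fib (n+1+d)) =
        lucas d * Nat.fib (n+d) + lucas d * Nat.fib (n+1+d) := by ring
    rw [r1, r2, r3, hdist]
    omega

/-- The Chung–Graham rule of expansion for even interval `d`,
with `A = lucas d - 1` and `B = Nat.fib (2 + d) - 1`.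
Sequences are indexed from 1 (so `ε 0 = 0`) and finitely supported. -/
def CGRule (d : ℕ) (ε : ℕ → ℕ) : Prop :=
  ε 0 = 0 ∧
  {k | ε k ≠ 0}.Finite ∧
  ε 1 ≤ Nat.fib (2 + d) - 1 ∧
  (∀ k, 2 ≤ k → ε k ≤ lucas d - 1) ∧
  (∀ m, 2 ≤ m → ε m = lucas d - 1 →
    (∀ k, 2 ≤ k → k ≤ m - 1 → ε k = lucas d - 1 - 1) →
    ε 1 < Nat.fib (2 + d) - 1) ∧
  (∀ k j, 2 ≤ k → k < j → ε k = lucas d - 1 → ε j = lucas d - 1 →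
    ∃ c, k < c ∧ c < j ∧ ε c ≤ lucas d - 1 - 2)

/-- Lexicographic-from-the-right strict order on coefficient sequences. -/
def CGlt (ε τ : ℕ → ℕ) : Prop :=
  ∃ ℓ, ε ℓ < τ ℓ ∧ ∀ k, ℓ < k → ε k = τ k


lemma lucas_pos : ∀ n, 1 ≤ lucas n
  | 0 => by simp [lucas]
  | 1 => by simp [lucas]
  | n+2 => by have := lucas_pos n; have := lucas_pos (n+1); simp [lucas]; omega

lemma three_le_lucas (n : ℕ) : 3 ≤ lucas (n+2) := by
  match n with
  | 0 => simp [lucas]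
  | n+1 =>
    have h1 := lucas_pos n
    have h2 := lucas_pos (n+1)
    simp only [lucas] at *
    omega

namespace CG
abbrev A (d : ℕ) : ℕ := lucas d - 1
abbrev B (d : ℕ) : ℕ := Nat.fib (2 + d) - 1
abbrev H (d k : ℕ) : ℕ := Nat.fib (2 + d * (k - 1))
def S (d m : ℕ) (ε : ℕ → ℕ) : ℕ := ∑ k ∈ Finset.range (m+1), ε k * H d k
def Supp (m : ℕ) (ε : ℕ → ℕ) : Prop := ∀ k, m < k → ε k = 0
def App (d m : ℕ) (ε : ℕ → ℕ) : Prop :=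
  (∀ j, 2 ≤ j → j ≤ m → ε j = A d → ∃ c, j < c ∧ c ≤ m ∧ ε c ≤ A d - 2) ∧
  ((∀ k, 2 ≤ k → k ≤ m → ε k = A d - 1) → ε 1 < B d)

variable {d : ℕ}

lemma hA (hd : 0 < d) (hde : Even d) : 2 ≤ A d := by
  have h2 : 2 ≤ d := by
    rcases hde with ⟨k, rfl⟩; omega
  have := three_le_lucas (d - 2)
  rw [show d - 2 + 2 = d by omega] at this
  have h3 : 3 ≤ lucas d := this
  simp only [A]; omega

lemma H_one : H d 1 = 1 := by simp [H]
lemma H_zero : H d 0 = 1 := by simp [H]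
lemma H_pos (k : ℕ) : 0 < H d k := by
  have : 0 < (2 : ℕ) + d * (k-1) := by omega
  simpa [H] using Nat.fib_pos.2 this
lemma H_lt (hd : 0 < d) {k : ℕ} (hk : 1 ≤ k) : H d k < H d (k+1) := by
  have harg : 2 + d * (k-1) < 2 + d * ((k+1)-1) := by
    have h1 : k - 1 < (k+1) - 1 := by omega
    have := (Nat.mul_lt_mul_left hd).2 h1
    omega
  exact Nat.fib_strictMonoOn (by simp) (by simp) harg
lemma H_two : H d 2 = Nat.fib (2 + d) := by simp [H]
lemma B_lt_H2 : B d < H d 2 := by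
  have := Nat.fib_pos.2 (show 0 < 2 + d by omega)
  simp only [B, H_two]; omega
lemma Hrec (hde : Even d) {m : ℕ} (hm : 1 ≤ m) :
    H d (m+2) + H d m = (A d + 1) * H d (m+1) := by
  obtain ⟨m', rfl⟩ : ∃ m', m = m' + 1 := ⟨m-1, by omega⟩
  have h := fib_lucas d hde (2 + d * m')
  have hl : A d + 1 = lucas d := by have := lucas_pos d; simp only [A]; omega
  have hH2 : H d (m'+1+2) = Nat.fib (2 + d * m' + 2*d) := by
    have e : (m'+1+2) - 1 = m' + 2 := by omega
    simp only [H, e]; congr 1; ring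
  have hH1 : H d (m'+1+1) = Nat.fib (2 + d * m' + d) := by
    have e : (m'+1+1) - 1 = m' + 1 := by omega
    simp only [H, e]; congr 1; ring
  have hH0 : H d (m'+1) = Nat.fib (2 + d * m') := by
    simp only [H, Nat.add_sub_cancel]
  rw [hH2, hH1, hH0, hl]
  exact h

end CG

namespace CG
variable {d : ℕ}

def tr (m : ℕ) (ε : ℕ → ℕ) : ℕ → ℕ := fun k => if k ≤ m then ε k else 0

lemma supp_tr (m : ℕ) (ε : ℕ → ℕ) : Supp m (tr m ε) := by
  intro k hk; simp [tr, Nat.not_le.2 hk]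

lemma adm_tr (hd : 0 < d) (hde : Even d) (m : ℕ) {ε : ℕ → ℕ} (hε : CGRule d ε) :
    CGRule d (tr m ε) := by
  have hA2 := hA hd hde
  obtain ⟨h0, hfin, h1, h4, h5, h6⟩ := hε
  refine ⟨by simp [tr, h0], ?_, ?_, ?_, ?_, ?_⟩
  · exact hfin.subset (by intro k hk; simp only [tr, Set.mem_setOf_eq] at *; split at hk <;> simp_all)
  · by_cases h : 1 ≤ m <;> simp [tr, h, h1]
  · intro k hk
    by_cases h : k ≤ m <;> simp [tr, h, h4 k hk]
  · intro m' hm' hAm' hrun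
    by_cases h : m' ≤ m
    · simp only [tr, if_pos h] at hAm'
      have h1m : (1:ℕ) ≤ m := by omega
      have := h5 m' hm' hAm' (fun k hk2 hkm => by
        have hkm' : k ≤ m := by omega
        have := hrun k hk2 hkm
        simpa [tr, hkm'] using this)
      simpa [tr, h1m] using this
    · simp only [tr, if_neg h] at hAm'
      simp only [A] at hA2
      omega
  · intro k j hk hkj hAk hAj
    by_cases hjm : j ≤ m
    · have hkm : k ≤ m := by omega
      simp only [tr, if_pos hjm, if_pos hkm] at hAk hAj
      obtain ⟨c, hc1, hc2, hc3⟩ := h6 k j hk hkj hAk hAj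
      exact ⟨c, hc1, hc2, by simp only [tr]; split <;> omega⟩
    · simp only [tr, if_neg hjm] at hAj
      simp only [A] at hA2
      omega

lemma adm_update (hd : 0 < d) (hde : Even d) {m : ℕ} (hm : 1 ≤ m) {ε : ℕ → ℕ} {c : ℕ}
    (hε : CGRule d ε) (hs : Supp m ε) (hcA : c ≤ A d) (happ : c = A d → App d m ε) :
    CGRule d (Function.update ε (m+1) c) := by
  have hA2 := hA hd hde
  obtain ⟨h0, hfin, h1, h4, h5, h6⟩ := hε
  set τ := Function.update ε (m+1) c with hτ
  have hτk : ∀ k, k ≠ m+1 → τ k = ε k := fun k hk => Function.update_of_ne hk _ _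
  have hτm : τ (m+1) = c := Function.update_self _ _ _
  refine ⟨?_, ?_, ?_, ?_, ?_, ?_⟩
  · rw [hτk 0 (by omega)]; exact h0
  · exact (hfin.union (Set.finite_singleton (m+1))).subset (by
      intro k hk; simp only [Set.mem_setOf_eq, Set.mem_union, Set.mem_singleton_iff] at *
      by_cases hkm : k = m+1
      · right; exact hkm
      · left; rwa [hτk k hkm] at hk)
  · rw [hτk 1 (by omega)]; exact h1
  · intro k hk
    by_cases hkm : k = m+1
    · rw [hkm, hτm]; exact hcA
    · rw [hτk k hkm]; exact h4 k hk
  · intro m' hm' hAm' hrun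
    rw [hτk 1 (by omega)]
    by_cases hmm : m' = m+1
    · subst hmm
      rw [hτm] at hAm'
      have happ2 := (happ hAm').2
      exact happ2 (fun k hk2 hkm => by
        have := hrun k hk2 (by omega)
        rwa [hτk k (by omega)] at this)
    · by_cases hgt : m' > m+1
      · rw [hτk m' (by omega)] at hAm'
        have := hs m' (by omega)
        simp only [A] at hA2
        omega
      · have hmle : m' ≤ m := by omega
        rw [hτk m' (by omega)] at hAm'
        exact h5 m' hm' hAm' (fun k hk2 hkm => by
          have := hrun k hk2 hkm
          rwa [hτk k (by omega)] at this)
  · intro k j hk hkj hAk hAj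
    by_cases hjm : j = m+1
    · subst hjm
      rw [hτm] at hAj
      rw [hτk k (by omega)] at hAk
      by_cases hkm : k ≤ m
      · obtain ⟨c', hc1, hc2, hc3⟩ := (happ hAj).1 k hk hkm hAk
        exact ⟨c', hc1, by omega, by rw [hτk c' (by omega)]; exact hc3⟩
      · have := hs k (by omega)
        simp only [A] at hA2
        omega
    · by_cases hjgt : j > m+1
      · rw [hτk j (by omega)] at hAj
        have := hs j (by omega)
        simp only [A] at hA2
        omega
      · have hjle : j ≤ m := by omega
        rw [hτk j (by omega)] at hAj
        rw [hτk k (by omega)] at hAk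
        obtain ⟨c', hc1, hc2, hc3⟩ := h6 k j hk hkj hAk hAj
        exact ⟨c', hc1, hc2, by rw [hτk c' (by omega)]; exact hc3⟩

lemma supp_update {m : ℕ} {ε : ℕ → ℕ} {c : ℕ} (hs : Supp m ε) :
    Supp (m+1) (Function.update ε (m+1) c) := by
  intro k hk
  rw [Function.update_of_ne (by omega)]
  exact hs k (by omega)

lemma S_update {m : ℕ} {ε : ℕ → ℕ} (c : ℕ) :
    S d (m+1) (Function.update ε (m+1) c) = S d m ε + c * H d (m+1) := by
  unfold S
  rw [Finset.sum_range_succ]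
  congr 1
  · apply Finset.sum_congr rfl
    intro k hk
    rw [Function.update_of_ne (by simp at hk; omega)]
  · rw [Function.update_self]

lemma S_congr {m : ℕ} {ε τ : ℕ → ℕ} (h : ∀ k, k ≤ m → ε k = τ k) :
    S d m ε = S d m τ := by
  unfold S
  apply Finset.sum_congr rfl
  intro k hk
  rw [h k (by simp at hk; omega)]

lemma S_finsum {m : ℕ} {ε : ℕ → ℕ} (hs : Supp m ε) :
    ∑ᶠ k, ε k * H d k = S d m ε := by
  apply finsum_eq_sum_of_support_subset
  intro k hk
  simp only [Function.mem_support] at hk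
  simp only [Finset.coe_range, Set.mem_Iio]
  by_contra hc
  rw [hs k (by omega)] at hk
  simp at hk

end CG

namespace CG
variable {d : ℕ}

lemma UB (hd : 0 < d) (hde : Even d) :
    ∀ m, 1 ≤ m → ∀ ε, CGRule d ε → Supp m ε →
      S d m ε < H d (m+1) ∧ (App d m ε → S d m ε + H d m < H d (m+1)) := by
  intro m hm
  induction m, hm using Nat.le_induction with
  | base =>
    intro ε hε hsupp
    obtain ⟨h0, hfin, h1, h4, h5, h6⟩ := hε
    have hS : S d 1 ε = ε 1 := by
      unfold S
      rw [Finset.sum_range_succ, Finset.sum_range_one, h0, H_one]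
      ring
    have hf : 0 < Nat.fib (2 + d) := Nat.fib_pos.2 (by omega)
    have e12 : H d (1+1) = Nat.fib (2 + d) := by norm_num [H]
    have eB : B d = Nat.fib (2 + d) - 1 := rfl
    constructor
    · rw [hS, e12]; omega
    · intro happ
      have h1lt : ε 1 < B d := happ.2 (fun k hk2 hk1 => by omega)
      rw [hS, H_one, e12]
      omega
  | succ m hm ih =>
    intro ε hε hsupp
    have hA2 := hA hd hde
    have hAd : A d = lucas d - 1 := rfl
    have hBd : B d = Nat.fib (2+d) - 1 := rfl
    have hε' : CGRule d (tr m ε) := adm_tr hd hde m hε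
    have hsupp' : Supp m (tr m ε) := supp_tr m ε
    obtain ⟨h0, hfin, h1, h4, h5, h6⟩ := hε
    set c := ε (m+1) with hc
    have hcA : c ≤ A d := h4 (m+1) (by omega)
    have hSsplit : S d (m+1) ε = S d m (tr m ε) + c * H d (m+1) := by
      unfold S
      rw [Finset.sum_range_succ]
      congr 1
      apply Finset.sum_congr rfl
      intro k hk
      simp only [Finset.mem_range] at hk
      simp [tr, show k ≤ m by omega]
    obtain ⟨ih1, ih2⟩ := ih (tr m ε) hε' hsupp'
    have hrec : H d (m+2) + H d m = A d * H d (m+1) + H d (m+1) := by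
      have h := Hrec hde hm (d := d)
      calc H d (m+2) + H d m = (A d + 1) * H d (m+1) := h
      _ = A d * H d (m+1) + H d (m+1) := by ring
    have hHlt1 : H d m < H d (m+1) := H_lt hd hm
    have hHpos : 0 < H d (m+1) := H_pos _
    rw [show m+1+1 = m+2 from by omega]
    have happA : c = A d → App d m (tr m ε) := by
      intro hcA'
      constructor
      · intro j hj2 hjm hAj
        simp only [tr, if_pos hjm] at hAj
        obtain ⟨c', hc1, hc2, hc3⟩ := h6 j (m+1) hj2 (by omega) hAj (by omega)
        refine ⟨c', hc1, by omega, ?_⟩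
        simp only [tr, if_pos (show c' ≤ m by omega)]
        exact hc3
      · intro hrun
        have := h5 (m+1) (by omega) (by omega) (fun k hk2 hkm => by
          have := hrun k hk2 (by omega)
          simpa [tr, show k ≤ m by omega] using this)
        simpa [tr, show (1:ℕ) ≤ m by omega] using this
    constructor
    · -- part 1
      rw [hSsplit]
      by_cases hceq : c = A d
      · have happ' := happA hceq
        have h2 := ih2 happ'
        rw [hceq]
        -- S + A*H < A*H + H - Hm, from S + Hm < H
        omega
      · have hcle : c ≤ A d - 1 := by omega
        have hmul : c * H d (m+1) ≤ (A d - 1) * H d (m+1) := by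
          exact Nat.mul_le_mul_right _ hcle
        have hmul1 : (A d - 1) * H d (m+1) + H d (m+1) = A d * H d (m+1) := by
          calc (A d - 1) * H d (m+1) + H d (m+1) = ((A d - 1) + 1) * H d (m+1) := by ring
          _ = A d * H d (m+1) := by rw [show A d - 1 + 1 = A d by omega]
        omega
    · -- part 2
      intro happ
      have hcne : c ≠ A d := by
        intro hceq
        obtain ⟨c', hc1, hc2, _⟩ := happ.1 (m+1) (by omega) (le_refl _) hceq
        omega
      rw [hSsplit]
      by_cases hceq : c = A d - 1
      · have happ' : App d m (tr m ε) := by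
          constructor
          · intro j hj2 hjm hAj
            simp only [tr, if_pos hjm] at hAj
            obtain ⟨c', hc1, hc2, hc3⟩ := happ.1 j hj2 (by omega) hAj
            have hc'm : c' ≤ m := by
              rcases Nat.lt_or_ge c' (m+1) with h | h
              · omega
              · exfalso
                have : c' = m+1 := by omega
                rw [this] at hc3
                omega
            refine ⟨c', hc1, hc'm, ?_⟩
            simp only [tr, if_pos hc'm]
            exact hc3
          · intro hrun
            have := happ.2 (fun k hk2 hkm => by
              rcases Nat.lt_or_ge k (m+1) with h | h
              · have := hrun k hk2 (by omega)
                simpa [tr, show k ≤ m by omega] using this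
              · have : k = m+1 := by omega
                rw [this]; omega)
            simpa [tr, show (1:ℕ) ≤ m by omega] using this
        have h2 := ih2 happ'
        rw [hceq]
        have hmul1 : (A d - 1) * H d (m+1) + H d (m+1) = A d * H d (m+1) := by
          calc (A d - 1) * H d (m+1) + H d (m+1) = ((A d - 1) + 1) * H d (m+1) := by ring
          _ = A d * H d (m+1) := by rw [show A d - 1 + 1 = A d by omega]
        omega
      · have hcle : c ≤ A d - 2 := by omega
        have hmul : c * H d (m+1) ≤ (A d - 2) * H d (m+1) :=
          Nat.mul_le_mul_right _ hcle
        have hmul2 : (A d - 2) * H d (m+1) + 2 * H d (m+1) = A d * H d (m+1) := by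
          calc (A d - 2) * H d (m+1) + 2 * H d (m+1) = ((A d - 2) + 2) * H d (m+1) := by ring
          _ = A d * H d (m+1) := by rw [show A d - 2 + 2 = A d by omega]
        omega

end CG

namespace CG
variable {d : ℕ}

lemma EX (hd : 0 < d) (hde : Even d) :
    ∀ m, 1 ≤ m → ∀ n,
      (n < H d (m+1) → ∃ ε, CGRule d ε ∧ Supp m ε ∧ S d m ε = n) ∧
      (n + H d m < H d (m+1) → ∃ ε, CGRule d ε ∧ Supp m ε ∧ App d m ε ∧ S d m ε = n) := by
  intro m hm
  induction m, hm using Nat.le_induction with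
  | base =>
    intro n
    have hA2 := hA hd hde
    have hAd : A d = lucas d - 1 := rfl
    have hBd : B d = Nat.fib (2+d) - 1 := rfl
    have hf : 0 < Nat.fib (2 + d) := Nat.fib_pos.2 (by omega)
    have e12 : H d (1+1) = Nat.fib (2 + d) := by norm_num [H]
    have key : ∀ n', n' ≤ B d → CGRule d (fun k => if k = 1 then n' else 0) ∧
        Supp 1 (fun k => if k = 1 then n' else 0) ∧
        S d 1 (fun k => if k = 1 then n' else 0) = n' := by
      intro n' hn'
      refine ⟨⟨by simp, ?_, by simpa using hn', ?_, ?_, ?_⟩, ?_, ?_⟩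
      · exact (Set.finite_singleton 1).subset (by
          intro k hk; simp only [Set.mem_setOf_eq, Set.mem_singleton_iff] at *
          by_contra hne; simp [hne] at hk)
      · intro k hk; simp [show k ≠ 1 by omega]
      · intro m' hm' hAm' _
        simp [show m' ≠ 1 by omega] at hAm'
        omega
      · intro k j hk hkj hAk _
        simp [show k ≠ 1 by omega] at hAk
        omega
      · intro k hk; simp [show k ≠ 1 by omega]
      · unfold S
        rw [Finset.sum_range_succ, Finset.sum_range_one]
        simp [H_one]
    constructor
    · intro hn
      rw [e12] at hn
      obtain ⟨ha, hs, hv⟩ := key n (by omega)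
      exact ⟨_, ha, hs, hv⟩
    · intro hn
      rw [e12, H_one] at hn
      obtain ⟨ha, hs, hv⟩ := key n (by omega)
      refine ⟨_, ha, hs, ⟨?_, ?_⟩, hv⟩
      · intro j hj2 hj1; omega
      · intro _; simp; omega
  | succ m hm ih =>
    intro n
    have hA2 := hA hd hde
    have hAd : A d = lucas d - 1 := rfl
    have hBd : B d = Nat.fib (2+d) - 1 := rfl
    have hrec : H d (m+2) + H d m = A d * H d (m+1) + H d (m+1) := by
      have h := Hrec hde hm (d := d)
      calc H d (m+2) + H d m = (A d + 1) * H d (m+1) := h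
      _ = A d * H d (m+1) + H d (m+1) := by ring
    have hHlt1 : H d m < H d (m+1) := H_lt hd hm
    have hHpos : 0 < H d (m+1) := H_pos _
    have hmul1 : (A d - 1) * H d (m+1) + H d (m+1) = A d * H d (m+1) := by
      calc (A d - 1) * H d (m+1) + H d (m+1) = ((A d - 1) + 1) * H d (m+1) := by ring
      _ = A d * H d (m+1) := by rw [show A d - 1 + 1 = A d by omega]
    have hmul2 : (A d - 2) * H d (m+1) + 2 * H d (m+1) = A d * H d (m+1) := by
      calc (A d - 2) * H d (m+1) + 2 * H d (m+1) = ((A d - 2) + 2) * H d (m+1) := by ring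
      _ = A d * H d (m+1) := by rw [show A d - 2 + 2 = A d by omega]
    rw [show m+1+1 = m+2 from by omega]
    constructor
    · -- part 1
      intro hn
      by_cases hbig : n < A d * H d (m+1)
      · set c := n / H d (m+1) with hcdef
        set r := n % H d (m+1) with hrdef
        have hcr : c * H d (m+1) + r = n := by
          rw [Nat.mul_comm]; exact Nat.div_add_mod n (H d (m+1))
        have hr : r < H d (m+1) := Nat.mod_lt _ hHpos
        have hcle : c ≤ A d - 1 := by
          have : c < A d := (Nat.div_lt_iff_lt_mul hHpos).2 hbig
          omega
        obtain ⟨ε, hadm, hsupp, hS⟩ := (ih r).1 hr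
        refine ⟨Function.update ε (m+1) c,
          adm_update hd hde hm hadm hsupp (by omega) (fun h => absurd h (by omega)),
          supp_update hsupp, ?_⟩
        rw [S_update, hS]
        omega
      · push_neg at hbig
        set r := n - A d * H d (m+1) with hrdef
        have hr : r + H d m < H d (m+1) := by omega
        obtain ⟨ε, hadm, hsupp, happ, hS⟩ := (ih r).2 hr
        refine ⟨Function.update ε (m+1) (A d),
          adm_update hd hde hm hadm hsupp (le_refl _) (fun _ => happ),
          supp_update hsupp, ?_⟩
        rw [S_update, hS]
        omega
    · -- part 2
      intro hn
      by_cases hbig : n < (A d - 1) * H d (m+1)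
      · set c := n / H d (m+1) with hcdef
        set r := n % H d (m+1) with hrdef
        have hcr : c * H d (m+1) + r = n := by
          rw [Nat.mul_comm]; exact Nat.div_add_mod n (H d (m+1))
        have hr : r < H d (m+1) := Nat.mod_lt _ hHpos
        have hcle : c ≤ A d - 2 := by
          have : c < A d - 1 := (Nat.div_lt_iff_lt_mul hHpos).2 hbig
          omega
        obtain ⟨ε, hadm, hsupp, hS⟩ := (ih r).1 hr
        set τ := Function.update ε (m+1) c with hτ
        have hτm : τ (m+1) = c := Function.update_self _ _ _
        have hτk : ∀ k, k ≠ m+1 → τ k = ε k := fun k hk => Function.update_of_ne hk _ _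
        refine ⟨τ, adm_update hd hde hm hadm hsupp (by omega)
            (fun h => absurd h (by omega)), supp_update hsupp, ⟨?_, ?_⟩, ?_⟩
        · intro j hj2 hjm hAj
          by_cases hjeq : j = m+1
          · rw [hjeq, hτm] at hAj; omega
          · refine ⟨m+1, by omega, le_refl _, ?_⟩
            rw [hτm]; exact hcle
        · intro hrun
          have := hrun (m+1) (by omega) (le_refl _)
          rw [hτm] at this
          omega
        · rw [hτ, S_update, hS]; omega
      · push_neg at hbig
        set r := n - (A d - 1) * H d (m+1) with hrdef
        have hr : r + H d m < H d (m+1) := by omega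
        obtain ⟨ε, hadm, hsupp, happ, hS⟩ := (ih r).2 hr
        set τ := Function.update ε (m+1) (A d - 1) with hτ
        have hτm : τ (m+1) = A d - 1 := Function.update_self _ _ _
        have hτk : ∀ k, k ≠ m+1 → τ k = ε k := fun k hk => Function.update_of_ne hk _ _
        refine ⟨τ, adm_update hd hde hm hadm hsupp (by omega)
            (fun h => absurd h (by omega)), supp_update hsupp, ⟨?_, ?_⟩, ?_⟩
        · intro j hj2 hjm hAj
          by_cases hjeq : j = m+1
          · rw [hjeq, hτm] at hAj; omega
          · rw [hτk j hjeq] at hAj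
            obtain ⟨c', hc1, hc2, hc3⟩ := happ.1 j hj2 (by omega) hAj
            refine ⟨c', hc1, by omega, ?_⟩
            rw [hτk c' (by omega)]
            exact hc3
        · intro hrun
          have h1 : ε 1 < B d := happ.2 (fun k hk2 hkm => by
            have := hrun k hk2 (by omega)
            rwa [hτk k (by omega)] at this)
          rwa [hτk 1 (by omega)]
        · rw [hτ, S_update, hS]; omega

end CG

namespace CG
variable {d : ℕ}

lemma sum_lt_H (hd : 0 < d) (hde : Even d) {ε : ℕ → ℕ} (hε : CGRule d ε) {ℓ : ℕ}
    (hℓ : 1 ≤ ℓ) : ∑ k ∈ Finset.range ℓ, ε k * H d k < H d ℓ := by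
  rcases Nat.eq_or_lt_of_le hℓ with h1 | h2
  · rw [← h1, Finset.sum_range_one, hε.1]
    simpa using H_pos 1
  · have hm : 1 ≤ ℓ - 1 := by omega
    have h := (UB hd hde (ℓ-1) hm (tr (ℓ-1) ε) (adm_tr hd hde _ hε) (supp_tr _ _)).1
    rw [show ℓ - 1 + 1 = ℓ by omega] at h
    calc ∑ k ∈ Finset.range ℓ, ε k * H d k
        = ∑ k ∈ Finset.range ℓ, tr (ℓ-1) ε k * H d k := by
          apply Finset.sum_congr rfl
          intro k hk
          simp only [Finset.mem_range] at hk
          simp [tr, show k ≤ ℓ - 1 by omega]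
      _ = S d (ℓ-1) (tr (ℓ-1) ε) := by
          unfold S
          rw [show ℓ - 1 + 1 = ℓ by omega]
      _ < H d ℓ := h

lemma mono (hd : 0 < d) (hde : Even d) {ε τ : ℕ → ℕ} (hε : CGRule d ε) (hτ : CGRule d τ)
    (h : CGlt ε τ) : ∑ᶠ k, ε k * H d k < ∑ᶠ k, τ k * H d k := by
  obtain ⟨ℓ, hlt, hab⟩ := h
  have hℓ1 : 1 ≤ ℓ := by
    by_contra hc
    have h0 : ℓ = 0 := by omega
    rw [h0, hε.1, hτ.1] at hlt
    omega
  obtain ⟨bε, hbε⟩ := (hε.2.1).bddAbove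
  obtain ⟨bτ, hbτ⟩ := (hτ.2.1).bddAbove
  set M := max (max bε bτ) ℓ with hM
  have hsε : Supp M ε := by
    intro k hk
    by_contra hc
    have := hbε (show k ∈ {k | ε k ≠ 0} from hc)
    omega
  have hsτ : Supp M τ := by
    intro k hk
    by_contra hc
    have := hbτ (show k ∈ {k | τ k ≠ 0} from hc)
    omega
  rw [S_finsum hsε, S_finsum hsτ]
  have hsplit : ∀ σ : ℕ → ℕ, S d M σ = (∑ k ∈ Finset.range ℓ, σ k * H d k) +
      σ ℓ * H d ℓ + ∑ k ∈ Finset.Ico (ℓ+1) (M+1), σ k * H d k := by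
    intro σ
    unfold S
    rw [← Finset.sum_range_add_sum_Ico _ (show ℓ ≤ M + 1 by omega),
      Finset.sum_eq_sum_Ico_succ_bot (show ℓ < M + 1 by omega)]
    ring
  rw [hsplit ε, hsplit τ]
  have htail : ∑ k ∈ Finset.Ico (ℓ+1) (M+1), ε k * H d k
      = ∑ k ∈ Finset.Ico (ℓ+1) (M+1), τ k * H d k := by
    apply Finset.sum_congr rfl
    intro k hk
    simp only [Finset.mem_Ico] at hk
    rw [hab k (by omega)]
  rw [htail]
  have h1 : ∑ k ∈ Finset.range ℓ, ε k * H d k < H d ℓ := sum_lt_H hd hde hε hℓ1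
  have h2 : (ε ℓ + 1) * H d ℓ ≤ τ ℓ * H d ℓ := Nat.mul_le_mul_right _ hlt
  have h3 : (ε ℓ + 1) * H d ℓ = ε ℓ * H d ℓ + H d ℓ := by ring
  omega

lemma tricho {ε τ : ℕ → ℕ} (hfε : {k | ε k ≠ 0}.Finite) (hfτ : {k | τ k ≠ 0}.Finite)
    (hne : ε ≠ τ) : CGlt ε τ ∨ CGlt τ ε := by
  have hD : {k | ε k ≠ τ k}.Finite := by
    apply (hfε.union hfτ).subset
    intro k hk
    simp only [Set.mem_setOf_eq, Set.mem_union] at *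
    by_contra hc
    push_neg at hc
    omega
  have hne' : {k | ε k ≠ τ k}.Nonempty := by
    rcases Function.ne_iff.1 hne with ⟨k, hk⟩
    exact ⟨k, hk⟩
  obtain ⟨ℓ, hℓmem, hℓmax⟩ := Set.Finite.exists_maximalFor id _ hD hne'
  simp only [Set.mem_setOf_eq, id] at hℓmem hℓmax
  have habove : ∀ k, ℓ < k → ε k = τ k := by
    intro k hk
    by_contra hc
    have := hℓmax hc (le_of_lt hk)
    omega
  rcases Nat.lt_or_ge (ε ℓ) (τ ℓ) with h | h
  · exact Or.inl ⟨ℓ, h, habove⟩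
  · exact Or.inr ⟨ℓ, by omega, fun k hk => (habove k hk).symm⟩

lemma adm_zero (hd : 0 < d) (hde : Even d) : CGRule d (fun _ => 0) := by
  have hA2 := hA hd hde
  have hAd : A d = lucas d - 1 := rfl
  refine ⟨rfl, by simp, by simp, fun k _ => by simp, ?_, ?_⟩
  · intro m hm hAm _
    exfalso
    have h0 : (0:ℕ) = lucas d - 1 := hAm
    omega
  · intro k j _ _ hAk _
    exfalso
    have h0 : (0:ℕ) = lucas d - 1 := hAk
    omega

lemma exists_rep (hd : 0 < d) (hde : Even d) (n : ℕ) :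
    ∃ σ, CGRule d σ ∧ ∑ᶠ k, σ k * H d k = n := by
  set m := n + 5 with hm
  have hnH : n < H d (m+1) := by
    have hH : H d (m+1) = Nat.fib (2 + d * m) := by simp [H]
    have h1 : 2 + m ≤ 2 + d * m := by
      have : m ≤ d * m := Nat.le_mul_of_pos_left m hd
      omega
    have h2 : n + 7 ≤ Nat.fib (n + 7) := Nat.le_fib_self (by omega)
    have h3 : Nat.fib (2 + m) ≤ Nat.fib (2 + d * m) := Nat.fib_mono h1
    have he : 2 + m = n + 7 := by omega
    rw [he] at h3
    omega
  obtain ⟨σ, hadm, hsupp, hS⟩ := (EX hd hde m (by omega) n).1 hnH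
  exact ⟨σ, hadm, by rw [S_finsum hsupp]; exact hS⟩

lemma lt_of_val_lt (hd : 0 < d) (hde : Even d) {ε τ : ℕ → ℕ}
    (hε : CGRule d ε) (hτ : CGRule d τ)
    (h : ∑ᶠ k, ε k * H d k < ∑ᶠ k, τ k * H d k) : CGlt ε τ := by
  have hne : ε ≠ τ := by
    intro he
    rw [he] at h
    omega
  rcases tricho hε.2.1 hτ.2.1 hne with h1 | h2
  · exact h1
  · exact absurd (mono hd hde hτ hε h2) (by omega)

end CG

theorem stmt_16 (d : ℕ) (hd : 0 < d) (hde : Even d)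
    (lub : (ℕ → ℕ) → (ℕ → ℕ))
    (hmem : ∀ ε, CGRule d ε → CGRule d (lub ε))
    (hgt : ∀ ε, CGRule d ε → CGlt ε (lub ε))
    (hleast : ∀ ε τ, CGRule d ε → CGRule d τ → CGlt ε τ → ¬ CGlt τ (lub ε)) :
    ∀ n : ℕ,
      ∑ᶠ k, (lub^[n] (fun _ => 0)) k * Nat.fib (2 + d * (k - 1)) = n := by
  have key : ∀ n : ℕ, CGRule d (lub^[n] (fun _ => 0)) ∧
      ∑ᶠ k, (lub^[n] (fun _ => 0)) k * CG.H d k = n := by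
    intro n
    induction n with
    | zero =>
      refine ⟨by simpa using CG.adm_zero hd hde, ?_⟩
      simp
    | succ n ih =>
      obtain ⟨hadm, hval⟩ := ih
      rw [Function.iterate_succ_apply']
      set ε := lub^[n] (fun _ => 0) with hε
      have hτadm : CGRule d (lub ε) := hmem ε hadm
      have hτgt : CGlt ε (lub ε) := hgt ε hadm
      have hvlt : n < ∑ᶠ k, (lub ε) k * CG.H d k := by
        have := CG.mono hd hde hadm hτadm hτgt
        omega
      refine ⟨hτadm, ?_⟩
      by_contra hne
      have hge : n + 2 ≤ ∑ᶠ k, (lub ε) k * CG.H d k := by omega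
      obtain ⟨σ, hσadm, hσval⟩ := CG.exists_rep hd hde (n+1)
      have h1 : CGlt ε σ := CG.lt_of_val_lt hd hde hadm hσadm (by omega)
      have h2 : CGlt σ (lub ε) := CG.lt_of_val_lt hd hde hσadm hτadm (by omega)
      exact hleast ε σ hadm hσadm h1 h2
  exact fun n => (key n).2
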